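/- arXiv:1309.0747 — 2 statements merged into one kernel-verified Lean document; each statement's English description precedes it below -/
import Mathlib

section
/- Let M be a metric space. Suppose there exists δ > 0 such that for every R > 0 and every ε > 0 there exist a real Hilbert space H and a mapping T : M → S_H into its unit sphere satisfying ω_T(R) ≤ ε and sup_{t>0} φ_T(t) ≥ δ. Then M coarsely embeds into a real Hilbert space. -/
/-- `T` is a coarse embedding between the "metric spaces" given by distance
functions `dX`, `dY`. -/
def IsCoarseEmb {X Y : Type*} (dX : X → X → ℝ) (dY : Y → Y → ℝ) (T : X → Y) : Prop :=
  ∃ ρ₁ ρ₂ : ℝ → ℝ,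
    MonotoneOn ρ₁ (Set.Ici 0) ∧ MonotoneOn ρ₂ (Set.Ici 0) ∧
    (∀ t, 0 ≤ t → 0 ≤ ρ₁ t) ∧ (∀ t, 0 ≤ t → 0 ≤ ρ₂ t) ∧
    Filter.Tendsto ρ₁ Filter.atTop Filter.atTop ∧
    ∀ x y, ρ₁ (dX x y) ≤ dY (T x) (T y) ∧ dY (T x) (T y) ≤ ρ₂ (dX x y)

universe u

set_option maxHeartbeats 1000000

/-- Dadarlat–Guentner: Let `M` be a metric space. Suppose there is `δ > 0` such that for all
`R > 0` and `ε > 0` there are a real Hilbert space `H` and a map `T : M → S_H` into its unit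
sphere with `ω_T R ≤ ε` (i.e. `dist (T x) (T y) ≤ ε` whenever `dist x y ≤ R`) and
`sup_{t > 0} φ_T t ≥ δ` (i.e. for every `c < δ` there is `t > 0` such that
`dist (T x) (T y) ≥ c` whenever `dist x y ≥ t`). Then `M` coarsely embeds into a real
Hilbert space. -/
theorem coarse_embedding_of_sphere_maps
    (M : Type u) [MetricSpace M]
    (h : ∃ δ > (0 : ℝ), ∀ R > (0 : ℝ), ∀ ε > (0 : ℝ),
      ∃ (H : Type u) (_ : NormedAddCommGroup H) (_ : InnerProductSpace ℝ H)
        (_ : CompleteSpace H) (T : M → H),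
        (∀ x, ‖T x‖ = 1) ∧
        (∀ x y, dist x y ≤ R → dist (T x) (T y) ≤ ε) ∧
        (∀ c < δ, ∃ t > (0 : ℝ), ∀ x y, t ≤ dist x y → c ≤ dist (T x) (T y))) :
    ∃ (H : Type u) (_ : NormedAddCommGroup H) (_ : InnerProductSpace ℝ H)
      (_ : CompleteSpace H) (T : M → H),
      IsCoarseEmb (fun x y => dist x y) (fun u v => dist u v) T := by
  classical
  obtain ⟨δ, hδ, hmain⟩ := h
  by_cases hM : Nonempty M
  swap
  · obtain ⟨H, i1, i2, i3, T, -, -, -⟩ := hmain 1 one_pos 1 one_pos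
    exact ⟨H, i1, i2, i3, T, id, id, monotoneOn_id, monotoneOn_id,
      fun t ht => ht, fun t ht => ht, Filter.tendsto_id,
      fun x y => (hM ⟨x⟩).elim⟩
  obtain ⟨x₀⟩ := hM
  have key : ∀ n : ℕ, ∃ (H : Type u) (_ : NormedAddCommGroup H) (_ : InnerProductSpace ℝ H)
      (_ : CompleteSpace H) (T : M → H),
      (∀ x, ‖T x‖ = 1) ∧
      (∀ x y, dist x y ≤ (n : ℝ) + 1 → dist (T x) (T y) ≤ (1/2 : ℝ) ^ n) ∧
      (∃ t > (0 : ℝ), ∀ x y, t ≤ dist x y → δ/2 ≤ dist (T x) (T y)) := by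
    intro n
    obtain ⟨H, i1, i2, i3, T, h1, h2, h3⟩ :=
      hmain ((n : ℝ) + 1) (by positivity) ((1/2 : ℝ) ^ n) (by positivity)
    exact ⟨H, i1, i2, i3, T, h1, h2, h3 (δ/2) (by linarith)⟩
  choose Hn i1 i2 i3 Tn hnorm hup t ht hlow using key
  letI := i1
  letI := i2
  letI := i3
  haveI : Fact ((1 : ENNReal) ≤ 2) := ⟨by norm_num⟩
  -- uniform bound on differences
  have hb : ∀ (n : ℕ) (x y : M), ‖Tn n x - Tn n y‖ ≤ 2 := by
    intro n x y
    calc ‖Tn n x - Tn n y‖ ≤ ‖Tn n x‖ + ‖Tn n y‖ := norm_sub_le _ _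
      _ = 2 := by rw [hnorm, hnorm]; norm_num
  -- summability of squared differences
  have hsum : ∀ x y : M, Summable (fun n => ‖Tn n x - Tn n y‖ ^ 2) := by
    intro x y
    apply Summable.of_norm_bounded_eventually_nat (g := fun n => (1/4 : ℝ) ^ n)
      (summable_geometric_of_lt_one (by norm_num) (by norm_num))
    filter_upwards [Filter.eventually_ge_atTop ⌈dist x y⌉₊] with n hn
    have hd : dist x y ≤ (n : ℝ) + 1 := by
      have h1 : dist x y ≤ (⌈dist x y⌉₊ : ℝ) := Nat.le_ceil _
      have h2 : ((⌈dist x y⌉₊ : ℕ) : ℝ) ≤ (n : ℝ) := Nat.cast_le.2 hn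
      linarith
    have h1 := hup n x y hd
    rw [dist_eq_norm] at h1
    have h2 : ‖Tn n x - Tn n y‖ ^ 2 ≤ ((1/2 : ℝ) ^ n) ^ 2 :=
      pow_le_pow_left₀ (norm_nonneg _) h1 2
    have h3 : ((1/2 : ℝ) ^ n) ^ 2 = (1/4 : ℝ) ^ n := by
      rw [← pow_mul, mul_comm n 2, pow_mul]; norm_num
    calc ‖‖Tn n x - Tn n y‖ ^ 2‖ = ‖Tn n x - Tn n y‖ ^ 2 := by
          rw [Real.norm_eq_abs, abs_of_nonneg (by positivity)]
      _ ≤ (1/4 : ℝ) ^ n := h3 ▸ h2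
  -- membership in ℓ²
  have hmem : ∀ x : M, Memℓp (fun n => Tn n x - Tn n x₀) 2 := by
    intro x
    apply memℓp_gen
    simpa only [ENNReal.toReal_ofNat, Real.rpow_two] using hsum x x₀
  set T : M → lp Hn 2 := fun x => ⟨fun n => Tn n x - Tn n x₀, hmem x⟩ with hT
  -- norm squared formula
  have hnormsq : ∀ x y : M, ‖T x - T y‖ ^ 2 = ∑' n, ‖Tn n x - Tn n y‖ ^ 2 := by
    intro x y
    have h0 := lp.norm_rpow_eq_tsum (p := 2) (by norm_num) (T x - T y)
    simp only [ENNReal.toReal_ofNat, Real.rpow_two] at h0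
    rw [h0]
    congr 1
    funext n
    have hcoe : (T x - T y : lp Hn 2) n = Tn n x - Tn n y := by
      have := lp.coeFn_sub (T x) (T y)
      rw [show ((T x - T y : lp Hn 2) : ∀ n, Hn n) n = ((T x : ∀ n, Hn n) - (T y : ∀ n, Hn n)) n
        from congrFun this n]
      show (Tn n x - Tn n x₀) - (Tn n y - Tn n x₀) = Tn n x - Tn n y
      abel
    rw [hcoe]
  -- upper bound
  have hupper : ∀ x y : M, ‖T x - T y‖ ^ 2 ≤ 4 * dist x y + 6 := by
    intro x y
    rw [hnormsq]
    set N := ⌈dist x y⌉₊ with hN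
    have hsum' := hsum x y
    rw [← Summable.sum_add_tsum_nat_add N hsum']
    have h1 : ∑ n ∈ Finset.range N, ‖Tn n x - Tn n y‖ ^ 2 ≤ 4 * N := by
      calc ∑ n ∈ Finset.range N, ‖Tn n x - Tn n y‖ ^ 2
          ≤ ∑ _n ∈ Finset.range N, (4 : ℝ) := by
            refine Finset.sum_le_sum fun n _ => ?_
            nlinarith [hb n x y, norm_nonneg (Tn n x - Tn n y)]
        _ = 4 * N := by simp [mul_comm]
    have h2 : ∑' n, ‖Tn (n + N) x - Tn (n + N) y‖ ^ 2 ≤ 2 := by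
      have hterm : ∀ n : ℕ, ‖Tn (n + N) x - Tn (n + N) y‖ ^ 2 ≤ (1/4 : ℝ) ^ n := by
        intro n
        have hd : dist x y ≤ ((n + N : ℕ) : ℝ) + 1 := by
          have h1 : dist x y ≤ (N : ℝ) := Nat.le_ceil _
          have : (N : ℝ) ≤ ((n + N : ℕ) : ℝ) := by exact_mod_cast Nat.le_add_left N n
          linarith
        have h1 := hup (n + N) x y hd
        rw [dist_eq_norm] at h1
        have h2' : ‖Tn (n + N) x - Tn (n + N) y‖ ^ 2 ≤ ((1/2 : ℝ) ^ (n + N)) ^ 2 :=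
          pow_le_pow_left₀ (norm_nonneg _) h1 2
        have h3 : ((1/2 : ℝ) ^ (n + N)) ^ 2 = (1/4 : ℝ) ^ (n + N) := by
          rw [← pow_mul, mul_comm _ 2, pow_mul]; norm_num
        have h4 : ((1/4 : ℝ)) ^ (n + N) ≤ (1/4 : ℝ) ^ n :=
          pow_le_pow_of_le_one (by norm_num) (by norm_num) (Nat.le_add_right n N)
        linarith
      calc ∑' n, ‖Tn (n + N) x - Tn (n + N) y‖ ^ 2
          ≤ ∑' n, (1/4 : ℝ) ^ n := by
            refine Summable.tsum_le_tsum hterm ((summable_nat_add_iff N).2 hsum') ?_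
            exact summable_geometric_of_lt_one (by norm_num) (by norm_num)
        _ = (1 - 1/4)⁻¹ := tsum_geometric_of_lt_one (by norm_num) (by norm_num)
        _ ≤ 2 := by norm_num
    have h3 : (N : ℝ) ≤ dist x y + 1 := by
      have := Nat.ceil_lt_add_one (dist_nonneg : (0:ℝ) ≤ dist x y)
      linarith [this]
    linarith
  -- the scale function
  set m : ℕ → ℝ := fun N => ∑ k ∈ Finset.range N, (t k + 1) with hm
  have hm_nonneg : ∀ k : ℕ, (0 : ℝ) ≤ t k + 1 := fun k => by linarith [(ht k)]
  have hm_mono : Monotone m := fun a b hab =>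
    Finset.sum_le_sum_of_subset_of_nonneg (Finset.range_subset_range.2 hab)
      (fun i _ _ => hm_nonneg i)
  have hm_le : ∀ k N : ℕ, k < N → t k + 1 ≤ m N := fun k N hkN =>
    Finset.single_le_sum (fun i _ => hm_nonneg i) (Finset.mem_range.2 hkN)
  have hm_ge : ∀ N : ℕ, (N : ℝ) ≤ m N := by
    intro N
    calc (N : ℝ) = ∑ _k ∈ Finset.range N, (1 : ℝ) := by simp
      _ ≤ m N := Finset.sum_le_sum fun k _ => by linarith [(ht k)]
  -- counting function
  set C : ℝ → ℕ := fun r => ((Finset.range ⌈r⌉₊).filter (fun n => m (n + 1) ≤ r)).card with hC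
  have hC_mono : Monotone C := by
    intro r r' hrr'
    apply Finset.card_le_card
    intro n hn
    rw [Finset.mem_filter, Finset.mem_range] at hn ⊢
    exact ⟨lt_of_lt_of_le hn.1 (Nat.ceil_le_ceil hrr'), le_trans hn.2 hrr'⟩
  have hC_big : ∀ (K : ℕ) (r : ℝ), m K ≤ r → K ≤ C r := by
    intro K r hr
    have hsub : Finset.range K ⊆ (Finset.range ⌈r⌉₊).filter (fun n => m (n + 1) ≤ r) := by
      intro n hn
      rw [Finset.mem_range] at hn
      rw [Finset.mem_filter, Finset.mem_range]
      have h1 : m (n + 1) ≤ m K := hm_mono hn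
      have h2 : ((n : ℝ)) < r := by
        have : ((n : ℝ)) + 1 ≤ (K : ℝ) := by exact_mod_cast hn
        have := hm_ge K
        linarith
      exact ⟨Nat.lt_ceil.2 h2, le_trans h1 hr⟩
    calc K = (Finset.range K).card := (Finset.card_range K).symm
      _ ≤ _ := Finset.card_le_card hsub
  -- lower bound
  have hlower : ∀ x y : M, (δ/2) ^ 2 * (C (dist x y) : ℝ) ≤ ‖T x - T y‖ ^ 2 := by
    intro x y
    rw [hnormsq]
    set S := (Finset.range ⌈dist x y⌉₊).filter (fun n => m (n + 1) ≤ dist x y) with hS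
    calc (δ/2) ^ 2 * (C (dist x y) : ℝ) = ∑ _n ∈ S, (δ/2) ^ 2 := by
          rw [Finset.sum_const, nsmul_eq_mul, mul_comm]
      _ ≤ ∑ n ∈ S, ‖Tn n x - Tn n y‖ ^ 2 := by
          refine Finset.sum_le_sum fun n hn => ?_
          rw [hS, Finset.mem_filter] at hn
          have h1 : t n ≤ dist x y := by
            have := hm_le n (n + 1) (Nat.lt_succ_self n)
            linarith [hn.2]
          have h2 := hlow n x y h1
          rw [dist_eq_norm] at h2
          have := half_pos hδ
          nlinarith
      _ ≤ ∑' n, ‖Tn n x - Tn n y‖ ^ 2 :=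
          Summable.sum_le_tsum S (fun i _ => by positivity) (hsum x y)
  -- define ρ₁ ρ₂
  refine ⟨lp Hn 2, inferInstance, inferInstance, inferInstance, T,
    fun r => (δ/2) * Real.sqrt (C r), fun r => Real.sqrt (4 * r + 6),
    ?_, ?_, ?_, ?_, ?_, ?_⟩
  · intro a _ b _ hab
    exact mul_le_mul_of_nonneg_left
      (Real.sqrt_le_sqrt (Nat.cast_le.2 (hC_mono hab))) (by linarith)
  · intro a ha b _ hab
    exact Real.sqrt_le_sqrt (by linarith)
  · intro r _
    positivity
  · intro r _
    exact Real.sqrt_nonneg _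
  · rw [Filter.tendsto_atTop_atTop]
    intro b
    rcases le_or_gt b 0 with hb | hb
    · exact ⟨0, fun r _ => le_trans hb (by positivity)⟩
    · set K := ⌈(2 * b / δ) ^ 2⌉₊ with hK
      refine ⟨m K, fun r hr => ?_⟩
      have h1 : (K : ℝ) ≤ (C r : ℝ) := Nat.cast_le.2 (hC_big K r hr)
      have h2 : (2 * b / δ) ^ 2 ≤ (K : ℝ) := Nat.le_ceil _
      have h3 : Real.sqrt ((2 * b / δ) ^ 2) ≤ Real.sqrt (C r) :=
        Real.sqrt_le_sqrt (by linarith)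
      rw [Real.sqrt_sq (by positivity)] at h3
      have hδ' : δ ≠ 0 := ne_of_gt hδ
      calc b = (δ/2) * (2 * b / δ) := by field_simp
        _ ≤ (δ/2) * Real.sqrt (C r) := by
            exact mul_le_mul_of_nonneg_left h3 (by linarith)
  · intro x y
    dsimp only
    have hd : dist (T x) (T y) = ‖T x - T y‖ := dist_eq_norm _ _
    constructor
    · rw [hd]
      have h1 := hlower x y
      have h2 : ((δ/2) * Real.sqrt (C (dist x y))) ^ 2 ≤ ‖T x - T y‖ ^ 2 := by
        rw [mul_pow, Real.sq_sqrt (Nat.cast_nonneg _)]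
        exact h1
      have h3 : (0 : ℝ) ≤ (δ/2) * Real.sqrt (C (dist x y)) := by positivity
      nlinarith [norm_nonneg (T x - T y)]
    · rw [hd]
      have h1 := hupper x y
      have h2 : ‖T x - T y‖ = Real.sqrt (‖T x - T y‖ ^ 2) :=
        (Real.sqrt_sq (norm_nonneg _)).symm
      rw [h2]
      exact Real.sqrt_le_sqrt h1
end

section
/- Let 0 < p ≤ 1, let X be a p-normed space, let H be a real Hilbert space, let a > 0, let φ : [0,∞) → [0,∞) be nondecreasing, and let T : X → H be a map satisfying φ(‖x−y‖^p) ≤ ‖T(x) − T(y)‖² ≤ (‖x−y‖^p)^(2a) for all x, y ∈ X. Then there exists a continuous negative definite function f : X → ℝ with f(0) = 0 such that φ(‖x‖^p) ≤ f(x) ≤ (‖x‖^p)^(2a) for every x ∈ X. -/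
namespace InvMeanAux

variable {X : Type*} [AddCommGroup X]

/-- The submodule of bounded real functions on `X`. -/
def Bdd (X : Type*) [AddCommGroup X] : Submodule ℝ (X → ℝ) where
  carrier := {g | ∃ C, ∀ z, |g z| ≤ C}
  add_mem' := by
    rintro g h ⟨C, hC⟩ ⟨D, hD⟩
    exact ⟨C + D, fun z => (abs_add_le _ _).trans (add_le_add (hC z) (hD z))⟩
  zero_mem' := ⟨0, fun z => by simp⟩
  smul_mem' := by
    rintro c g ⟨C, hC⟩
    exact ⟨|c| * C, fun z => by
      simp only [Pi.smul_apply, smul_eq_mul, abs_mul]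
      exact mul_le_mul_of_nonneg_left (hC z) (abs_nonneg c)⟩

/-- Average of `g` over translates `z + s i`. -/
noncomputable def A (g : X → ℝ) {n : ℕ} (s : Fin n → X) (z : X) : ℝ :=
  (∑ i, g (z + s i)) / n

/-- Supremum over `z` of the averages. -/
noncomputable def SupA (g : X → ℝ) {n : ℕ} (s : Fin n → X) : ℝ :=
  sSup (Set.range (A g s))

def qSet (g : X → ℝ) : Set ℝ :=
  {r | ∃ (n : ℕ) (_ : 0 < n) (s : Fin n → X), r = SupA g s}

noncomputable def q (g : X → ℝ) : ℝ := sInf (qSet g)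

lemma A_le {g : X → ℝ} {M : ℝ} (hM : ∀ z, g z ≤ M) {n : ℕ} (hn : 0 < n)
    (s : Fin n → X) (z : X) : A g s z ≤ M := by
  have hnn : (0:ℝ) < n := by exact_mod_cast hn
  rw [A, div_le_iff₀ hnn]
  calc (∑ i, g (z + s i)) ≤ ∑ _i : Fin n, M := Finset.sum_le_sum fun i _ => hM _
    _ = M * n := by simp [Finset.sum_const, mul_comm]

lemma le_A {g : X → ℝ} {m : ℝ} (hm : ∀ z, m ≤ g z) {n : ℕ} (hn : 0 < n)
    (s : Fin n → X) (z : X) : m ≤ A g s z := by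
  have hnn : (0:ℝ) < n := by exact_mod_cast hn
  rw [A, le_div_iff₀ hnn]
  calc m * n = ∑ _i : Fin n, m := by simp [Finset.sum_const, mul_comm]
    _ ≤ ∑ i, g (z + s i) := Finset.sum_le_sum fun i _ => hm _

lemma bddAbove_range_A {g : X → ℝ} {M : ℝ} (hM : ∀ z, g z ≤ M) {n : ℕ} (hn : 0 < n)
    (s : Fin n → X) : BddAbove (Set.range (A g s)) := by
  refine ⟨M, ?_⟩
  rintro r ⟨z, rfl⟩
  exact A_le hM hn s z

lemma SupA_le {g : X → ℝ} {M : ℝ} (hM : ∀ z, g z ≤ M) {n : ℕ} (hn : 0 < n)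
    (s : Fin n → X) : SupA g s ≤ M :=
  csSup_le (Set.range_nonempty _) (by rintro r ⟨z, rfl⟩; exact A_le hM hn s z)

lemma le_SupA {g : X → ℝ} {m M : ℝ} (hm : ∀ z, m ≤ g z) (hM : ∀ z, g z ≤ M) {n : ℕ}
    (hn : 0 < n) (s : Fin n → X) : m ≤ SupA g s :=
  (le_A hm hn s 0).trans (le_csSup (bddAbove_range_A hM hn s) ⟨0, rfl⟩)

lemma qSet_nonempty (g : X → ℝ) : (qSet g).Nonempty :=
  ⟨SupA g (fun _ : Fin 1 => (0:X)), 1, one_pos, _, rfl⟩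

lemma qSet_bddBelow {g : X → ℝ} {m M : ℝ} (hm : ∀ z, m ≤ g z) (hM : ∀ z, g z ≤ M) :
    m ∈ lowerBounds (qSet g) := by
  rintro r ⟨n, hn, s, rfl⟩
  exact le_SupA hm hM hn s

lemma q_le_SupA {g : X → ℝ} {m : ℝ} (hm : ∀ z, m ≤ g z) {M : ℝ} (hM : ∀ z, g z ≤ M)
    {n : ℕ} (hn : 0 < n) (s : Fin n → X) : q g ≤ SupA g s :=
  csInf_le ⟨m, qSet_bddBelow hm hM⟩ ⟨n, hn, s, rfl⟩

lemma q_le {g : X → ℝ} {m M : ℝ} (hm : ∀ z, m ≤ g z) (hM : ∀ z, g z ≤ M) :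
    q g ≤ M :=
  (q_le_SupA hm hM one_pos (fun _ : Fin 1 => (0:X))).trans (SupA_le hM one_pos _)

lemma le_q {g : X → ℝ} {m M : ℝ} (hm : ∀ z, m ≤ g z) (hM : ∀ z, g z ≤ M) :
    m ≤ q g :=
  le_csInf (qSet_nonempty g) (qSet_bddBelow hm hM)

end InvMeanAux

namespace InvMeanAux
variable {X : Type*} [AddCommGroup X]

def comb {n m : ℕ} (s : Fin n → X) (t : Fin m → X) : Fin (n * m) → X :=
  fun k => s (finProdFinEquiv.symm (Fin.cast (mul_comm n m) k)).2 +
    t (finProdFinEquiv.symm (Fin.cast (mul_comm n m) k)).1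

lemma sum_comb (g : X → ℝ) {n m : ℕ} (s : Fin n → X) (t : Fin m → X) (z : X) :
    ∑ k, g (z + comb s t k) = ∑ p : Fin m × Fin n, g (z + (s p.2 + t p.1)) := by
  rw [← Equiv.sum_comp (finProdFinEquiv.trans (finCongr (mul_comm m n)))
    (fun k => g (z + comb s t k))]
  apply Finset.sum_congr rfl
  intro p _
  simp [comb, finCongr]

lemma A_add (g h : X → ℝ) {n : ℕ} (s : Fin n → X) (z : X) :
    A (g + h) s z = A g s z + A h s z := by
  simp only [A, Pi.add_apply, Finset.sum_add_distrib, add_div]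

lemma A_comb_le_left {g : X → ℝ} {m M : ℝ} (hm : ∀ z, m ≤ g z) (hM : ∀ z, g z ≤ M)
    {n k : ℕ} (hn : 0 < n) (hk : 0 < k) (s : Fin n → X) (t : Fin k → X) (z : X) :
    A g (comb s t) z ≤ SupA g s := by
  have hnn : (0:ℝ) < n := by exact_mod_cast hn
  have hkk : (0:ℝ) < k := by exact_mod_cast hk
  rw [A, div_le_iff₀ (by push_cast; positivity)]
  rw [sum_comb]
  rw [Fintype.sum_prod_type]
  have key : ∀ j : Fin k, ∑ i : Fin n, g (z + (s i + t j)) ≤ n * SupA g s := by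
    intro j
    have h1 : ∑ i : Fin n, g (z + (s i + t j)) = n * A g s (z + t j) := by
      rw [A, mul_div_cancel₀ _ (ne_of_gt hnn)]
      apply Finset.sum_congr rfl
      intro i _
      congr 1
      abel
    rw [h1]
    have h2 : A g s (z + t j) ≤ SupA g s :=
      le_csSup (bddAbove_range_A hM hn s) ⟨z + t j, rfl⟩
    exact mul_le_mul_of_nonneg_left h2 hnn.le
  calc ∑ j : Fin k, ∑ i : Fin n, g (z + (s i + t j))
      ≤ ∑ _j : Fin k, (n * SupA g s) := Finset.sum_le_sum fun j _ => key j
    _ = SupA g s * ↑(n * k) := by push_cast; simp [Finset.sum_const]; ring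

lemma A_comb_le_right {h : X → ℝ} {m M : ℝ} (hm : ∀ z, m ≤ h z) (hM : ∀ z, h z ≤ M)
    {n k : ℕ} (hn : 0 < n) (hk : 0 < k) (s : Fin n → X) (t : Fin k → X) (z : X) :
    A h (comb s t) z ≤ SupA h t := by
  have hnn : (0:ℝ) < n := by exact_mod_cast hn
  have hkk : (0:ℝ) < k := by exact_mod_cast hk
  rw [A, div_le_iff₀ (by push_cast; positivity)]
  rw [sum_comb, Fintype.sum_prod_type, Finset.sum_comm]
  have key : ∀ i : Fin n, ∑ j : Fin k, h (z + (s i + t j)) ≤ k * SupA h t := by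
    intro i
    have h1 : ∑ j : Fin k, h (z + (s i + t j)) = k * A h t (z + s i) := by
      rw [A, mul_div_cancel₀ _ (ne_of_gt hkk)]
      apply Finset.sum_congr rfl
      intro j _
      congr 1
      abel
    rw [h1]
    have h2 : A h t (z + s i) ≤ SupA h t :=
      le_csSup (bddAbove_range_A hM hk t) ⟨z + s i, rfl⟩
    exact mul_le_mul_of_nonneg_left h2 hkk.le
  calc ∑ i : Fin n, ∑ j : Fin k, h (z + (s i + t j))
      ≤ ∑ _i : Fin n, (k * SupA h t) := Finset.sum_le_sum fun i _ => key i
    _ = SupA h t * ↑(n * k) := by push_cast; simp [Finset.sum_const]; ring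

lemma q_add_le {g h : X → ℝ} {Cg Ch : ℝ} (hg : ∀ z, |g z| ≤ Cg) (hh : ∀ z, |h z| ≤ Ch) :
    q (g + h) ≤ q g + q h := by
  have hgm : ∀ z, -Cg ≤ g z := fun z => neg_le_of_abs_le (hg z)
  have hgM : ∀ z, g z ≤ Cg := fun z => le_of_abs_le (hg z)
  have hhm : ∀ z, -Ch ≤ h z := fun z => neg_le_of_abs_le (hh z)
  have hhM : ∀ z, h z ≤ Ch := fun z => le_of_abs_le (hh z)
  have hsm : ∀ z, -(Cg + Ch) ≤ (g + h) z := fun z => by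
    have h1 := hgm z; have h2 := hhm z
    simp only [Pi.add_apply]; linarith
  have hsM : ∀ z, (g + h) z ≤ Cg + Ch := fun z => add_le_add (hgM z) (hhM z)
  -- main estimate
  have main : ∀ (n : ℕ) (hn : 0 < n) (s : Fin n → X) (k : ℕ) (hk : 0 < k) (t : Fin k → X),
      q (g + h) ≤ SupA g s + SupA h t := by
    intro n hn s k hk t
    have hq : q (g + h) ≤ SupA (g + h) (comb s t) :=
      q_le_SupA hsm hsM (Nat.mul_pos hn hk) (comb s t)
    refine hq.trans (csSup_le (Set.range_nonempty _) ?_)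
    rintro r ⟨z, rfl⟩
    rw [A_add]
    exact add_le_add (A_comb_le_left hgm hgM hn hk s t z)
      (A_comb_le_right hhm hhM hn hk s t z)
  -- take infima
  have step1 : ∀ (k : ℕ) (hk : 0 < k) (t : Fin k → X), q (g + h) - SupA h t ≤ q g := by
    intro k hk t
    refine le_csInf (qSet_nonempty g) ?_
    rintro r ⟨n, hn, s, rfl⟩
    linarith [main n hn s k hk t]
  have step2 : q (g + h) - q g ≤ q h := by
    refine le_csInf (qSet_nonempty h) ?_
    rintro r ⟨k, hk, t, rfl⟩
    linarith [step1 k hk t]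
  linarith

lemma q_smul {c : ℝ} (hc : 0 < c) {g : X → ℝ} {C : ℝ} (hg : ∀ z, |g z| ≤ C) :
    q (c • g) = c * q g := by
  have hgm : ∀ z, -C ≤ g z := fun z => neg_le_of_abs_le (hg z)
  have hgM : ∀ z, g z ≤ C := fun z => le_of_abs_le (hg z)
  have hA : ∀ (n : ℕ) (s : Fin n → X) (z : X), A (c • g) s z = c * A g s z := by
    intro n s z
    simp only [A, Pi.smul_apply, smul_eq_mul, ← Finset.mul_sum, mul_div_assoc]
  have hSup : ∀ (n : ℕ) (hn : 0 < n) (s : Fin n → X), SupA (c • g) s = c * SupA g s := by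
    intro n hn s
    have h1 : Set.range (A (c • g) s) = (fun y => c * y) '' Set.range (A g s) := by
      ext r
      constructor
      · rintro ⟨z, rfl⟩; exact ⟨A g s z, ⟨z, rfl⟩, (hA n s z).symm⟩
      · rintro ⟨y, ⟨z, rfl⟩, rfl⟩; exact ⟨z, hA n s z⟩
    rw [SupA, h1]
    have := (OrderIso.mulLeft₀ c hc).map_csSup' (Set.range_nonempty (A g s))
      (bddAbove_range_A hgM hn s)
    exact this.symm
  have hqs : qSet (c • g) = (fun y => c * y) '' qSet g := by
    ext r
    constructor
    · rintro ⟨n, hn, s, rfl⟩; exact ⟨SupA g s, ⟨n, hn, s, rfl⟩, (hSup n hn s).symm⟩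
    · rintro ⟨y, ⟨n, hn, s, rfl⟩, rfl⟩; exact ⟨n, hn, s, (hSup n hn s).symm⟩
  rw [q, hqs]
  have := (OrderIso.mulLeft₀ c hc).map_csInf' (qSet_nonempty g)
    ⟨-C, qSet_bddBelow hgm hgM⟩
  exact this.symm

end InvMeanAux

namespace InvMeanAux
variable {X : Type*} [AddCommGroup X]

lemma q_shift_le {g : X → ℝ} {C : ℝ} (hg : ∀ z, |g z| ≤ C) (s : X) :
    q (fun z => g z - g (z + s)) ≤ 0 := by
  set F := fun z => g z - g (z + s) with hF
  have hC0 : 0 ≤ C := (abs_nonneg _).trans (hg 0)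
  have hFm : ∀ z, -(2 * C) ≤ F z := by
    intro z
    have h1 := neg_le_of_abs_le (hg z); have h2 := le_of_abs_le (hg (z + s))
    simp only [hF]; linarith
  have hFM : ∀ z, F z ≤ 2 * C := by
    intro z
    have h1 := le_of_abs_le (hg z); have h2 := neg_le_of_abs_le (hg (z + s))
    simp only [hF]; linarith
  have key : ∀ n : ℕ, 0 < n → q F ≤ 2 * C / n := by
    intro n hn
    have hnn : (0:ℝ) < n := by exact_mod_cast hn
    set σ : Fin n → X := fun i => (i.1 + 1) • s with hσ
    have hA : ∀ z, A F σ z ≤ 2 * C / n := by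
      intro z
      have hsum : ∑ i : Fin n, F (z + σ i)
          = g (z + 1 • s) - g (z + (n + 1) • s) := by
        have : ∀ i : Fin n, F (z + σ i)
            = g (z + (i.1 + 1) • s) - g (z + (i.1 + 1 + 1) • s) := by
          intro i
          have h2 : (i.1 + 1 + 1) • s = (i.1 + 1) • s + s := succ_nsmul s (i.1 + 1)
          simp only [hF, hσ, add_assoc]
          congr 3
          rw [show i.1 + (1 + 1) = i.1 + 1 + 1 by omega, h2]
        rw [Finset.sum_congr rfl (fun i _ => this i)]
        rw [Fin.sum_univ_eq_sum_range (fun i => g (z + (i + 1) • s) - g (z + (i + 1 + 1) • s))]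
        exact Finset.sum_range_sub' (fun i => g (z + (i + 1) • s)) n
      rw [A, hsum, div_le_div_iff_of_pos_right hnn]
      have h1 := le_of_abs_le (hg (z + 1 • s))
      have h2 := neg_le_of_abs_le (hg (z + (n + 1) • s))
      linarith
    have hq : q F ≤ SupA F σ := q_le_SupA hFm hFM hn σ
    exact hq.trans (csSup_le (Set.range_nonempty _) (by rintro r ⟨z, rfl⟩; exact hA z))
  by_contra hcon
  push_neg at hcon
  obtain ⟨n, hn⟩ := exists_nat_gt (2 * C / q F)
  have hdnn : (0:ℝ) ≤ 2 * C / q F := div_nonneg (by linarith) hcon.le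
  have hnn : (0:ℝ) < n := lt_of_le_of_lt hdnn hn
  have hnpos : 0 < n := by exact_mod_cast hnn
  have h1 : 2 * C / (n:ℝ) < q F := by
    rw [div_lt_iff₀ hnn]
    calc 2 * C = 2 * C / q F * q F := by field_simp
      _ < n * q F := by exact mul_lt_mul_of_pos_right hn hcon
      _ = q F * n := mul_comm _ _
  exact absurd (key n hnpos) (not_le.mpr h1)

end InvMeanAux

namespace InvMeanAux
variable {X : Type*} [AddCommGroup X]

lemma exists_mean (X : Type*) [AddCommGroup X] :
    ∃ L : Bdd X →ₗ[ℝ] ℝ, ∀ g : Bdd X, L g ≤ q (g : X → ℝ) := by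
  have N_hom : ∀ c : ℝ, 0 < c → ∀ g : Bdd X,
      (fun g : Bdd X => q (g : X → ℝ)) (c • g) = c * (fun g : Bdd X => q (g : X → ℝ)) g := by
    intro c hc g
    obtain ⟨C, hC⟩ := g.2
    exact q_smul hc hC
  have N_add : ∀ g h : Bdd X,
      (fun g : Bdd X => q (g : X → ℝ)) (g + h)
        ≤ (fun g : Bdd X => q (g : X → ℝ)) g + (fun g : Bdd X => q (g : X → ℝ)) h := by
    intro g h
    obtain ⟨C, hC⟩ := g.2
    obtain ⟨D, hD⟩ := h.2
    exact q_add_le hC hD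
  obtain ⟨L, -, hL⟩ := exists_extension_of_le_sublinear
    ⟨(⊥ : Submodule ℝ (Bdd X)), 0⟩ (fun g : Bdd X => q (g : X → ℝ)) N_hom N_add
    (by
      rintro ⟨x, hx⟩
      rw [Submodule.mem_bot] at hx
      subst hx
      have : ((0 : Bdd X) : X → ℝ) = 0 := rfl
      simp only [LinearPMap.mk_apply, LinearMap.zero_apply, this]
      exact le_q (m := 0) (M := 0) (fun z => le_refl 0) (fun z => le_refl 0))
  exact ⟨L, hL⟩

/-- shift of a bounded function -/
def shiftB (g : Bdd X) (s : X) : Bdd X :=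
  ⟨fun z => (g : X → ℝ) (z + s), by
    obtain ⟨C, hC⟩ := g.2
    exact ⟨C, fun z => hC (z + s)⟩⟩

section Mean
variable (L : Bdd X →ₗ[ℝ] ℝ)

lemma mean_le (hL : ∀ g : Bdd X, L g ≤ q (g : X → ℝ)) {g : Bdd X} {M : ℝ} (hM : ∀ z, (g : X → ℝ) z ≤ M) : L g ≤ M := by
  obtain ⟨C, hC⟩ := g.2
  exact (hL g).trans (q_le (fun z => neg_le_of_abs_le (hC z)) hM)

lemma le_mean (hL : ∀ g : Bdd X, L g ≤ q (g : X → ℝ)) {g : Bdd X} {m : ℝ} (hm : ∀ z, m ≤ (g : X → ℝ) z) : m ≤ L g := by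
  obtain ⟨C, hC⟩ := g.2
  have h1 : L (-g) ≤ -m := by
    have : ∀ z, ((-g : Bdd X) : X → ℝ) z ≤ -m := by
      intro z
      have : ((-g : Bdd X) : X → ℝ) z = -((g : X → ℝ) z) := rfl
      rw [this]
      linarith [hm z]
    exact mean_le L hL this
  have h2 : L (-g) = -(L g) := map_neg L g
  linarith

lemma mean_shift (hL : ∀ g : Bdd X, L g ≤ q (g : X → ℝ)) (g : Bdd X) (s : X) : L (shiftB g s) = L g := by
  obtain ⟨C, hC⟩ := g.2
  have h1 : L (g - shiftB g s) ≤ 0 := by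
    refine (hL _).trans ?_
    have hco : ((g - shiftB g s : Bdd X) : X → ℝ)
        = fun z => (g : X → ℝ) z - (g : X → ℝ) (z + s) := rfl
    rw [hco]
    exact q_shift_le hC s
  have h2 : L (shiftB g s - g) ≤ 0 := by
    refine (hL _).trans ?_
    have hco : ((shiftB g s - g : Bdd X) : X → ℝ)
        = fun z => (-(g : X → ℝ)) z - (-(g : X → ℝ)) (z + s) := by
      funext z
      show (g : X → ℝ) (z + s) - (g : X → ℝ) z = _
      simp only [Pi.neg_apply]
      ring
    rw [hco]
    exact q_shift_le (g := -(g : X → ℝ)) (C := C) (fun z => by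
      simpa using hC z) s
  have h3 : L (g - shiftB g s) = L g - L (shiftB g s) := map_sub L _ _
  have h4 : L (shiftB g s - g) = L (shiftB g s) - L g := map_sub L _ _
  linarith

end Mean
end InvMeanAux


/-- A symmetric real-valued function on `X × X` is a negative definite kernel. -/
def IsNegDefKernel {X : Type*} (N : X → X → ℝ) : Prop :=
  (∀ x y, N x y = N y x) ∧
  ∀ (n : ℕ) (x : Fin n → X) (c : Fin n → ℝ), (∑ i, c i) = 0 →
    ∑ i, ∑ j, N (x i) (x j) * c i * c j ≤ 0

/-- Invariant-mean step: let `X` be a `p`-normed space (`0 < p ≤ 1`), `H` a real Hilbert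
space, `a > 0`, `φ : [0,∞) → [0,∞)` nondecreasing, and `T : X → H` a map satisfying
`φ (‖x - y‖ ^ p) ≤ ‖T x - T y‖ ^ 2 ≤ (‖x - y‖ ^ p) ^ (2a)` for all `x, y`. Then there exists
a continuous (w.r.t. the metric `d(x,y) = ‖x - y‖ ^ p`) negative definite function
`f : X → ℝ` with `f 0 = 0` and `φ (‖x‖ ^ p) ≤ f x ≤ (‖x‖ ^ p) ^ (2a)` for every `x`. -/
theorem exists_negDef_function_with_bounds
    (p : ℝ) (hp0 : 0 < p) (hp1 : p ≤ 1)
    (X : Type*) [AddCommGroup X] [Module ℝ X] (nrm : X → ℝ)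
    (hnrm_nonneg : ∀ x, 0 ≤ nrm x)
    (hnrm_zero : ∀ x, nrm x = 0 ↔ x = 0)
    (hnrm_smul : ∀ (a : ℝ) (x : X), nrm (a • x) = |a| * nrm x)
    (hnrm_tri : ∀ x y, nrm (x + y) ^ p ≤ nrm x ^ p + nrm y ^ p)
    (H : Type*) [NormedAddCommGroup H] [InnerProductSpace ℝ H] [CompleteSpace H]
    (a : ℝ) (ha : 0 < a)
    (φ : ℝ → ℝ) (hφ_mono : MonotoneOn φ (Set.Ici 0)) (hφ_nonneg : ∀ t, 0 ≤ t → 0 ≤ φ t)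
    (T : X → H)
    (hT : ∀ x y, φ (nrm (x - y) ^ p) ≤ ‖T x - T y‖ ^ 2 ∧
      ‖T x - T y‖ ^ 2 ≤ (nrm (x - y) ^ p) ^ (2 * a)) :
    ∃ f : X → ℝ,
      (∀ (x : X), ∀ ε > (0 : ℝ), ∃ δ > (0 : ℝ), ∀ y : X,
        nrm (y - x) ^ p < δ → |f y - f x| < ε) ∧
      IsNegDefKernel (fun x y => f (x - y)) ∧
      f 0 = 0 ∧
      ∀ x, φ (nrm x ^ p) ≤ f x ∧ f x ≤ (nrm x ^ p) ^ (2 * a) := by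
  classical
  obtain ⟨L, hL⟩ := InvMeanAux.exists_mean X
  -- basic facts
  have hTub : ∀ x y : X, ‖T x - T y‖ ≤ (nrm (x - y) ^ p) ^ a := by
    intro x y
    have h1 := (hT x y).2
    have hb : (0:ℝ) ≤ nrm (x - y) ^ p := Real.rpow_nonneg (hnrm_nonneg _) p
    have h2 : (nrm (x - y) ^ p) ^ (2 * a) = ((nrm (x - y) ^ p) ^ a) ^ 2 := by
      rw [mul_comm, Real.rpow_mul hb, show ((2:ℝ)) = ((2:ℕ):ℝ) by norm_num,
        Real.rpow_natCast]
    rw [h2] at h1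
    exact (pow_le_pow_iff_left₀ (norm_nonneg _) (Real.rpow_nonneg hb a) two_ne_zero).mp h1
  -- the bounded functions
  have gmem : ∀ x : X, (fun z => ‖T (x + z) - T z‖ ^ 2) ∈ InvMeanAux.Bdd X := by
    intro x
    refine ⟨(nrm x ^ p) ^ (2 * a), fun z => ?_⟩
    rw [abs_of_nonneg (by positivity)]
    have := (hT (x + z) z).2
    rwa [add_sub_cancel_right] at this
  have kmem : ∀ x y : X, (fun z => ‖T (x + z) - T (y + z)‖ ^ 2) ∈ InvMeanAux.Bdd X := by
    intro x y
    refine ⟨(nrm (x - y) ^ p) ^ (2 * a), fun z => ?_⟩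
    rw [abs_of_nonneg (by positivity)]
    have := (hT (x + z) (y + z)).2
    rwa [add_sub_add_right_eq_sub] at this
  set gE : X → InvMeanAux.Bdd X := fun x => ⟨_, gmem x⟩ with hgE
  set kE : X → X → InvMeanAux.Bdd X := fun x y => ⟨_, kmem x y⟩ with hkE
  set f : X → ℝ := fun x => L (gE x) with hf
  -- key: invariance
  have key : ∀ x y : X, f (x - y) = L (kE x y) := by
    intro x y
    have hs : InvMeanAux.shiftB (gE (x - y)) y = kE x y := by
      apply Subtype.ext
      funext z
      show ‖T (x - y + (z + y)) - T (z + y)‖ ^ 2 = ‖T (x + z) - T (y + z)‖ ^ 2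
      rw [show x - y + (z + y) = x + z by abel, show z + y = y + z from add_comm z y]
    calc f (x - y) = L (InvMeanAux.shiftB (gE (x - y)) y) :=
          (InvMeanAux.mean_shift L hL _ y).symm
      _ = L (kE x y) := by rw [hs]
  -- bounds
  have hbounds : ∀ x, φ (nrm x ^ p) ≤ f x ∧ f x ≤ (nrm x ^ p) ^ (2 * a) := by
    intro x
    constructor
    · refine InvMeanAux.le_mean L hL fun z => ?_
      show φ (nrm x ^ p) ≤ ‖T (x + z) - T z‖ ^ 2
      have := (hT (x + z) z).1
      rwa [add_sub_cancel_right] at this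
    · refine InvMeanAux.mean_le L hL fun z => ?_
      show ‖T (x + z) - T z‖ ^ 2 ≤ (nrm x ^ p) ^ (2 * a)
      have := (hT (x + z) z).2
      rwa [add_sub_cancel_right] at this
  -- f 0 = 0
  have hf0 : f 0 = 0 := by
    have : gE 0 = 0 := by
      apply Subtype.ext
      funext z
      show ‖T (0 + z) - T z‖ ^ 2 = 0
      simp [zero_add]
    rw [hf]
    simp only [this, map_zero]
  refine ⟨f, ?_, ⟨?_, ?_⟩, hf0, hbounds⟩
  · -- continuity
    intro x ε hε
    set K := nrm x ^ p with hK
    have hK0 : 0 ≤ K := Real.rpow_nonneg (hnrm_nonneg _) p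
    set C0 := (K + 1) ^ a + K ^ a + 1 with hC0
    have hC0pos : 0 < C0 := by positivity
    refine ⟨min 1 ((ε / (2 * C0)) ^ a⁻¹), lt_min one_pos
      (Real.rpow_pos_of_pos (div_pos hε (by positivity)) _), fun y hy => ?_⟩
    set t := nrm (y - x) ^ p with ht
    have ht0 : 0 ≤ t := Real.rpow_nonneg (hnrm_nonneg _) p
    have ht1 : t ≤ 1 := le_of_lt (lt_of_lt_of_le hy (min_le_left _ _))
    have htδ : t ≤ (ε / (2 * C0)) ^ a⁻¹ := le_of_lt (lt_of_lt_of_le hy (min_le_right _ _))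
    -- pointwise estimate
    have hpt : ∀ z, |‖T (y + z) - T z‖ ^ 2 - ‖T (x + z) - T z‖ ^ 2|
        ≤ t ^ a * ((K + t) ^ a + K ^ a) := by
      intro z
      set u := T (y + z) - T z
      set v := T (x + z) - T z
      have huv : ‖u - v‖ ≤ t ^ a := by
        have h1 : u - v = T (y + z) - T (x + z) := sub_sub_sub_cancel_right _ _ _
        rw [h1]
        have := hTub (y + z) (x + z)
        rwa [add_sub_add_right_eq_sub] at this
      have hu : ‖u‖ ≤ (K + t) ^ a := by
        have h1 : ‖u‖ ≤ (nrm y ^ p) ^ a := by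
          have := hTub (y + z) z
          rwa [add_sub_cancel_right] at this
        refine h1.trans (Real.rpow_le_rpow (Real.rpow_nonneg (hnrm_nonneg _) p) ?_ ha.le)
        have h2 : nrm y ^ p ≤ nrm x ^ p + nrm (y - x) ^ p := by
          have := hnrm_tri x (y - x)
          rwa [show x + (y - x) = y by abel] at this
        rw [hK, ht]; linarith
      have hv : ‖v‖ ≤ K ^ a := by
        have := hTub (x + z) z
        rwa [add_sub_cancel_right] at this
      have habs : |‖u‖ ^ 2 - ‖v‖ ^ 2| ≤ ‖u - v‖ * (‖u‖ + ‖v‖) := by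
        have h1 : ‖u‖ ^ 2 - ‖v‖ ^ 2 = (‖u‖ - ‖v‖) * (‖u‖ + ‖v‖) := by ring
        rw [h1, abs_mul, abs_of_nonneg (by positivity : (0:ℝ) ≤ ‖u‖ + ‖v‖)]
        exact mul_le_mul_of_nonneg_right (abs_norm_sub_norm_le u v) (by positivity)
      refine habs.trans ?_
      have h2 : (0:ℝ) ≤ ‖u‖ + ‖v‖ := by positivity
      exact mul_le_mul huv (add_le_add hu hv) h2 (Real.rpow_nonneg ht0 a)
    -- from pointwise estimate to estimate on f
    have hfd : |f y - f x| ≤ t ^ a * ((K + t) ^ a + K ^ a) := by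
      have hsub : f y - f x = L (gE y - gE x) := by rw [map_sub]
      rw [hsub, abs_le]
      constructor
      · refine InvMeanAux.le_mean L hL fun z => ?_
        have := hpt z
        have h3 : ((gE y - gE x : InvMeanAux.Bdd X) : X → ℝ) z
            = ‖T (y + z) - T z‖ ^ 2 - ‖T (x + z) - T z‖ ^ 2 := rfl
        rw [h3]
        linarith [neg_le_of_abs_le this]
      · refine InvMeanAux.mean_le L hL fun z => ?_
        have := hpt z
        have h3 : ((gE y - gE x : InvMeanAux.Bdd X) : X → ℝ) z
            = ‖T (y + z) - T z‖ ^ 2 - ‖T (x + z) - T z‖ ^ 2 := rfl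
        rw [h3]
        linarith [le_of_abs_le this]
    -- numeric conclusion
    have hta : t ^ a ≤ ε / (2 * C0) := by
      calc t ^ a ≤ ((ε / (2 * C0)) ^ a⁻¹) ^ a := Real.rpow_le_rpow ht0 htδ ha.le
        _ = ε / (2 * C0) := Real.rpow_inv_rpow (by positivity) ha.ne'
    have hS : (K + t) ^ a + K ^ a ≤ C0 := by
      have : (K + t) ^ a ≤ (K + 1) ^ a :=
        Real.rpow_le_rpow (by linarith) (by linarith) ha.le
      rw [hC0]; linarith
    have hS0 : (0:ℝ) ≤ (K + t) ^ a + K ^ a := by positivity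
    calc |f y - f x| ≤ t ^ a * ((K + t) ^ a + K ^ a) := hfd
      _ ≤ (ε / (2 * C0)) * C0 := mul_le_mul hta hS hS0 (by positivity)
      _ = ε / 2 := by field_simp
      _ < ε := by linarith
  · -- symmetry
    intro x y
    simp only []
    rw [key x y, key y x]
    congr 1
    apply Subtype.ext
    funext z
    show ‖T (x + z) - T (y + z)‖ ^ 2 = ‖T (y + z) - T (x + z)‖ ^ 2
    rw [norm_sub_rev]
  · -- negative definiteness
    intro n xs c hc
    simp only []
    have hterm : ∀ i j, f (xs i - xs j) * c i * c j
        = L ((c i * c j) • kE (xs i) (xs j)) := by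
      intro i j
      rw [key, map_smul, smul_eq_mul]
      ring
    calc ∑ i, ∑ j, f (xs i - xs j) * c i * c j
        = ∑ i, ∑ j, L ((c i * c j) • kE (xs i) (xs j)) := by
          exact Finset.sum_congr rfl fun i _ => Finset.sum_congr rfl fun j _ => hterm i j
      _ = L (∑ i, ∑ j, (c i * c j) • kE (xs i) (xs j)) := by
          rw [map_sum]
          exact Finset.sum_congr rfl fun i _ => (map_sum L _ _).symm
      _ ≤ 0 := by
          refine InvMeanAux.mean_le L hL fun z => ?_
          -- compute the coercion pointwise
          have hco : ((∑ i, ∑ j, (c i * c j) • kE (xs i) (xs j) : InvMeanAux.Bdd X) : X → ℝ) z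
              = ∑ i, ∑ j, (c i * c j) * ‖T (xs i + z) - T (xs j + z)‖ ^ 2 := by
            rw [AddSubmonoidClass.coe_finset_sum, Finset.sum_apply]
            refine Finset.sum_congr rfl fun i _ => ?_
            rw [AddSubmonoidClass.coe_finset_sum, Finset.sum_apply]
            refine Finset.sum_congr rfl fun j _ => ?_
            rfl
          rw [hco]
          -- Hilbert space computation
          set u : Fin n → H := fun i => T (xs i + z) with hu
          set S : H := ∑ i, c i • u i with hS
          have expand : ∀ i j, (c i * c j) * ‖u i - u j‖ ^ 2
              = (‖u i‖ ^ 2 * c i) * c j + c i * (‖u j‖ ^ 2 * c j)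
                - 2 * (c i * c j * (inner ℝ (u i) (u j) : ℝ)) := by
            intro i j
            rw [@norm_sub_sq_real]
            ring
          have t1 : ∑ i, ∑ j, (‖u i‖ ^ 2 * c i) * c j = 0 := by
            have h1 : ∀ i : Fin n, ∑ j, (‖u i‖ ^ 2 * c i) * c j = 0 := fun i => by
              rw [← Finset.mul_sum, hc, mul_zero]
            simp [h1]
          have t2 : ∑ i, ∑ j, c i * (‖u j‖ ^ 2 * c j) = 0 := by
            have h1 : ∀ i : Fin n, ∑ j, c i * (‖u j‖ ^ 2 * c j)
                = c i * (∑ j, ‖u j‖ ^ 2 * c j) := fun i => (Finset.mul_sum _ _ _).symm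
            rw [Finset.sum_congr rfl fun i _ => h1 i, ← Finset.sum_mul, hc, zero_mul]
          have t3 : ∑ i, ∑ j, c i * c j * (inner ℝ (u i) (u j) : ℝ) = (inner ℝ S S : ℝ) := by
            rw [hS, sum_inner]
            refine Finset.sum_congr rfl fun i _ => ?_
            rw [real_inner_smul_left, inner_sum, Finset.mul_sum]
            refine Finset.sum_congr rfl fun j _ => ?_
            rw [real_inner_smul_right]
            ring
          calc ∑ i, ∑ j, (c i * c j) * ‖u i - u j‖ ^ 2
              = ∑ i, ∑ j, ((‖u i‖ ^ 2 * c i) * c j + c i * (‖u j‖ ^ 2 * c j)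
                - 2 * (c i * c j * (inner ℝ (u i) (u j) : ℝ))) := by
                exact Finset.sum_congr rfl fun i _ =>
                  Finset.sum_congr rfl fun j _ => expand i j
            _ = (∑ i, ∑ j, (‖u i‖ ^ 2 * c i) * c j)
                + (∑ i, ∑ j, c i * (‖u j‖ ^ 2 * c j))
                - 2 * (∑ i, ∑ j, c i * c j * (inner ℝ (u i) (u j) : ℝ)) := by
                simp only [Finset.sum_sub_distrib, Finset.sum_add_distrib, Finset.mul_sum]
            _ = -(2 * (inner ℝ S S : ℝ)) := by rw [t1, t2, t3]; ring
            _ ≤ 0 := by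
                have := real_inner_self_nonneg (x := S)
                linarith
end
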